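/- Let D be a distribution on ℝ^d with mean μ, bounded second moments, and R² := E_{s~D}[‖s−μ‖²]. Define U(S) = R² − ‖μ̂_S − μ‖² with U(∅)=0, where μ̂_S is the empirical mean. Then for any fixed z ∈ ℝ^d and k ≥ 2, E_{S ~ D^{k-1}}[U(S ∪ {z}) − U(S)] = (2R² − ‖z−μ‖²)/(k(k-1)) − (R² − ‖z−μ‖²)/(k²(k-1)). -/

import Mathlib

open MeasureTheory

noncomputable def empMean {E : Type*} [NormedAddCommGroup E] [NormedSpace ℝ E]
    {n : ℕ} (S : Fin n → E) : E := (n : ℝ)⁻¹ • ∑ i, S i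

section Aux

private lemma integrable_comp_fst'' {α β G : Type*} [MeasurableSpace α] [MeasurableSpace β]
    [NormedAddCommGroup G] {μ : Measure α} {ν : Measure β} [IsProbabilityMeasure μ]
    [IsProbabilityMeasure ν] {f : α → G} (hf : Integrable f μ) :
    Integrable (fun p : α × β => f p.1) (μ.prod ν) := by
  have h : MeasurePreserving Prod.fst (μ.prod ν) μ := ⟨measurable_fst, by simp⟩
  exact (h.integrable_comp hf.aestronglyMeasurable).mpr hf

private lemma integrable_comp_snd'' {α β G : Type*} [MeasurableSpace α] [MeasurableSpace β]
    [NormedAddCommGroup G] {μ : Measure α} {ν : Measure β} [IsProbabilityMeasure μ]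
    [IsProbabilityMeasure ν] {f : β → G} (hf : Integrable f ν) :
    Integrable (fun p : α × β => f p.2) (μ.prod ν) := by
  have h : MeasurePreserving Prod.snd (μ.prod ν) ν := ⟨measurable_snd, by simp⟩
  exact (h.integrable_comp hf.aestronglyMeasurable).mpr hf

private lemma pi_moments {d : ℕ} (D : Measure (EuclideanSpace ℝ (Fin d)))
    [IsProbabilityMeasure D] (μ : EuclideanSpace ℝ (Fin d))
    (hX : Integrable (fun s => s - μ) D)
    (hX2 : Integrable (fun s => ‖s - μ‖ ^ 2) D)
    (hμ0 : (∫ s, (s - μ) ∂D) = 0) :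
    ∀ m : ℕ,
      Integrable (fun S : Fin m → EuclideanSpace ℝ (Fin d) => ∑ i, (S i - μ))
          (Measure.pi fun _ => D) ∧
      Integrable (fun S : Fin m → EuclideanSpace ℝ (Fin d) => ‖∑ i, (S i - μ)‖ ^ 2)
          (Measure.pi fun _ => D) ∧
      (∫ S : Fin m → EuclideanSpace ℝ (Fin d), (∑ i, (S i - μ)) ∂(Measure.pi fun _ => D)) = 0 ∧
      (∫ S : Fin m → EuclideanSpace ℝ (Fin d), ‖∑ i, (S i - μ)‖ ^ 2 ∂(Measure.pi fun _ => D))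
        = m * ∫ s, ‖s - μ‖ ^ 2 ∂D := by
  intro m
  induction m with
  | zero =>
      refine ⟨?_, ?_, ?_, ?_⟩ <;>
        simp [Finset.univ_eq_empty, integrable_const]
  | succ m ih =>
      obtain ⟨hT, hT2, hTA, hTB⟩ := ih
      have hmp := (measurePreserving_piFinSuccAbove (fun _ : Fin (m + 1) => D) 0).symm
      have hkey : ∀ p : EuclideanSpace ℝ (Fin d) × (Fin m → EuclideanSpace ℝ (Fin d)),
          (MeasurableEquiv.piFinSuccAbove (fun _ : Fin (m + 1) => EuclideanSpace ℝ (Fin d))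
            0).symm p = Fin.cons p.1 p.2 := by
        intro p
        simp [MeasurableEquiv.piFinSuccAbove_symm_apply, Fin.insertNthEquiv, Fin.insertNth_zero]
      have hsum : ∀ p : EuclideanSpace ℝ (Fin d) × (Fin m → EuclideanSpace ℝ (Fin d)),
          (∑ i, ((Fin.cons p.1 p.2 : Fin (m + 1) → EuclideanSpace ℝ (Fin d)) i - μ))
            = (p.1 - μ) + ∑ j, (p.2 j - μ) := by
        intro p
        rw [Fin.sum_univ_succ]
        simp only [Fin.cons_zero, Fin.cons_succ]
      have hIG1 : Integrable
          (fun p : EuclideanSpace ℝ (Fin d) × (Fin m → EuclideanSpace ℝ (Fin d)) =>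
            (p.1 - μ) + ∑ j, (p.2 j - μ)) (D.prod (Measure.pi fun _ => D)) :=
        (integrable_comp_fst'' hX).add (integrable_comp_snd'' hT)
      have hG1cont : Continuous
          (fun p : EuclideanSpace ℝ (Fin d) × (Fin m → EuclideanSpace ℝ (Fin d)) =>
            (p.1 - μ) + ∑ j, (p.2 j - μ)) := by
        apply Continuous.add
        · exact continuous_fst.sub continuous_const
        · exact continuous_finset_sum _ fun j _ =>
            ((continuous_apply j).comp continuous_snd).sub continuous_const
      have hbound : Integrable
          (fun p : EuclideanSpace ℝ (Fin d) × (Fin m → EuclideanSpace ℝ (Fin d)) =>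
            2 * ‖p.1 - μ‖ ^ 2 + 2 * ‖∑ j, (p.2 j - μ)‖ ^ 2) (D.prod (Measure.pi fun _ => D)) :=
        ((integrable_comp_fst'' hX2).const_mul 2).add ((integrable_comp_snd'' hT2).const_mul 2)
      have hIG2 : Integrable
          (fun p : EuclideanSpace ℝ (Fin d) × (Fin m → EuclideanSpace ℝ (Fin d)) =>
            ‖(p.1 - μ) + ∑ j, (p.2 j - μ)‖ ^ 2) (D.prod (Measure.pi fun _ => D)) := by
        refine Integrable.mono' hbound ((hG1cont.norm.pow 2).aestronglyMeasurable) ?_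
        refine Filter.Eventually.of_forall fun p => ?_
        have h1 := norm_add_le (p.1 - μ) (∑ j, (p.2 j - μ))
        have h2 := norm_nonneg (p.1 - μ)
        have h3 := norm_nonneg (∑ j, (p.2 j - μ))
        have h2' := norm_nonneg ((p.1 - μ) + ∑ j, (p.2 j - μ))
        rw [Real.norm_eq_abs, abs_of_nonneg (sq_nonneg _)]
        nlinarith [pow_le_pow_left₀ h2' h1 2, sq_nonneg (‖p.1 - μ‖ - ‖∑ j, (p.2 j - μ)‖)]
      have hemb := (MeasurableEquiv.piFinSuccAbove
        (fun _ : Fin (m + 1) => EuclideanSpace ℝ (Fin d)) 0).symm.measurableEmbedding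
      have hc1 : ∀ p : EuclideanSpace ℝ (Fin d) × (Fin m → EuclideanSpace ℝ (Fin d)),
          (∑ i, (((MeasurableEquiv.piFinSuccAbove
              (fun _ : Fin (m + 1) => EuclideanSpace ℝ (Fin d)) 0).symm p) i - μ))
            = (p.1 - μ) + ∑ j, (p.2 j - μ) := fun p => by rw [hkey p]; exact hsum p
      have hc2 : ∀ p : EuclideanSpace ℝ (Fin d) × (Fin m → EuclideanSpace ℝ (Fin d)),
          ‖∑ i, (((MeasurableEquiv.piFinSuccAbove
              (fun _ : Fin (m + 1) => EuclideanSpace ℝ (Fin d)) 0).symm p) i - μ)‖ ^ 2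
            = ‖(p.1 - μ) + ∑ j, (p.2 j - μ)‖ ^ 2 := fun p => by rw [hc1 p]
      refine ⟨?_, ?_, ?_, ?_⟩
      · refine (hmp.integrable_comp_emb hemb).mp ?_
        have : ((fun S : Fin (m + 1) → EuclideanSpace ℝ (Fin d) => ∑ i, (S i - μ)) ∘
            (MeasurableEquiv.piFinSuccAbove
              (fun _ : Fin (m + 1) => EuclideanSpace ℝ (Fin d)) 0).symm)
            = fun p => (p.1 - μ) + ∑ j, (p.2 j - μ) := funext fun p => hc1 p
        rw [this]; exact hIG1
      · refine (hmp.integrable_comp_emb hemb).mp ?_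
        have : ((fun S : Fin (m + 1) → EuclideanSpace ℝ (Fin d) => ‖∑ i, (S i - μ)‖ ^ 2) ∘
            (MeasurableEquiv.piFinSuccAbove
              (fun _ : Fin (m + 1) => EuclideanSpace ℝ (Fin d)) 0).symm)
            = fun p => ‖(p.1 - μ) + ∑ j, (p.2 j - μ)‖ ^ 2 := funext fun p => hc2 p
        rw [this]; exact hIG2
      · rw [← hmp.integral_comp']
        rw [integral_congr_ae (Filter.Eventually.of_forall hc1)]
        rw [integral_prod _ hIG1]
        have hinner : ∀ x : EuclideanSpace ℝ (Fin d),
            (∫ y, ((x - μ) + ∑ j, (y j - μ)) ∂(Measure.pi fun _ : Fin m => D)) = x - μ := by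
          intro x
          rw [integral_add (integrable_const _) hT, integral_const, hTA]
          simp
        rw [integral_congr_ae (Filter.Eventually.of_forall hinner), hμ0]
      · rw [← hmp.integral_comp']
        rw [integral_congr_ae (Filter.Eventually.of_forall hc2)]
        rw [integral_prod _ hIG2]
        have hinner : ∀ x : EuclideanSpace ℝ (Fin d),
            (∫ y, ‖(x - μ) + ∑ j, (y j - μ)‖ ^ 2 ∂(Measure.pi fun _ : Fin m => D))
              = ‖x - μ‖ ^ 2 + m * ∫ s, ‖s - μ‖ ^ 2 ∂D := by
          intro x
          have hexp : ∀ y : Fin m → EuclideanSpace ℝ (Fin d),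
              ‖(x - μ) + ∑ j, (y j - μ)‖ ^ 2
                = (‖x - μ‖ ^ 2 + 2 * (inner ℝ (x - μ) (∑ j, (y j - μ)) : ℝ))
                    + ‖∑ j, (y j - μ)‖ ^ 2 := by
            intro y
            rw [norm_add_sq_real]
          rw [integral_congr_ae (Filter.Eventually.of_forall hexp)]
          have hi : Integrable (fun y : Fin m → EuclideanSpace ℝ (Fin d) =>
              (inner ℝ (x - μ) (∑ j, (y j - μ)) : ℝ)) (Measure.pi fun _ => D) := by
            simpa only [innerSL_apply_apply] using (innerSL ℝ (x - μ)).integrable_comp hT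
          have hia : Integrable (fun y : Fin m → EuclideanSpace ℝ (Fin d) =>
              ‖x - μ‖ ^ 2 + 2 * (inner ℝ (x - μ) (∑ j, (y j - μ)) : ℝ))
              (Measure.pi fun _ => D) := (integrable_const _).add (hi.const_mul 2)
          have hib : Integrable (fun y : Fin m → EuclideanSpace ℝ (Fin d) =>
              2 * (inner ℝ (x - μ) (∑ j, (y j - μ)) : ℝ))
              (Measure.pi fun _ => D) := hi.const_mul 2
          rw [integral_add hia hT2, integral_add (integrable_const _) hib,
            integral_const_mul]
          have hz : (∫ y, (inner ℝ (x - μ) (∑ j, (y j - μ)) : ℝ)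
              ∂(Measure.pi fun _ : Fin m => D)) = 0 := by
            rw [integral_inner hT, hTA, inner_zero_right]
          rw [hz, hTB, integral_const]
          simp
        rw [integral_congr_ae (Filter.Eventually.of_forall hinner)]
        rw [integral_add hX2 (integrable_const _), integral_const]
        simp only [measure_univ, probReal_univ, smul_eq_mul, one_mul, one_smul]
        push_cast
        ring

end Aux

theorem meanEstimation_marginal_contribution {d : ℕ}
    (D : Measure (EuclideanSpace ℝ (Fin d))) [IsProbabilityMeasure D]
    (μ : EuclideanSpace ℝ (Fin d)) (hμ : μ = ∫ s, s ∂D)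
    (hmom : Integrable (fun s => ‖s‖ ^ 2) D)
    (R2 : ℝ) (hR2 : R2 = ∫ s, ‖s - μ‖ ^ 2 ∂D)
    (z : EuclideanSpace ℝ (Fin d)) (k : ℕ) (hk : 2 ≤ k) :
    (∫ S : Fin (k - 1) → EuclideanSpace ℝ (Fin d),
        ((R2 - ‖empMean (Fin.cons z S) - μ‖ ^ 2) - (R2 - ‖empMean S - μ‖ ^ 2))
        ∂(Measure.pi fun _ => D))
      = (2 * R2 - ‖z - μ‖ ^ 2) / ((k : ℝ) * ((k : ℝ) - 1))
        - (R2 - ‖z - μ‖ ^ 2) / ((k : ℝ) ^ 2 * ((k : ℝ) - 1)) := by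
  classical
  have hgbd : Integrable (fun s : EuclideanSpace ℝ (Fin d) => (1 : ℝ) + ‖s‖ ^ 2) D :=
    (integrable_const 1).add hmom
  have hint : Integrable (fun s : EuclideanSpace ℝ (Fin d) => s) D := by
    refine Integrable.mono' hgbd aestronglyMeasurable_id
      (Filter.Eventually.of_forall fun s => ?_)
    have h := norm_nonneg s
    nlinarith [sq_nonneg (‖s‖ - 1), sq_nonneg ‖s‖]
  have hX : Integrable (fun s : EuclideanSpace ℝ (Fin d) => s - μ) D :=
    hint.sub (integrable_const μ)
  have hgbd2 : Integrable (fun s : EuclideanSpace ℝ (Fin d) =>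
      2 * ‖s‖ ^ 2 + 2 * ‖μ‖ ^ 2) D :=
    (hmom.const_mul 2).add (integrable_const _)
  have hX2 : Integrable (fun s : EuclideanSpace ℝ (Fin d) => ‖s - μ‖ ^ 2) D := by
    refine Integrable.mono' hgbd2
      (((continuous_id.sub continuous_const).norm.pow 2).aestronglyMeasurable)
      (Filter.Eventually.of_forall fun s => ?_)
    have h1 := norm_sub_le s μ
    have h2 := norm_nonneg s
    have h3 := norm_nonneg μ
    have h4 := norm_nonneg (s - μ)
    rw [Real.norm_eq_abs, abs_of_nonneg (sq_nonneg _)]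
    nlinarith [pow_le_pow_left₀ h4 h1 2, sq_nonneg (‖s‖ - ‖μ‖)]
  have hμ0 : (∫ s, (s - μ) ∂D) = 0 := by
    rw [integral_sub hint (integrable_const μ), integral_const, probReal_univ,
      one_smul, ← hμ, sub_self]
  obtain ⟨hT, hT2, hTA, hTB⟩ := pi_moments D μ hX hX2 hμ0 (k - 1)
  have hk1 : (k - 1) + 1 = k := by omega
  have hM : ((k - 1 : ℕ) : ℝ) = (k : ℝ) - 1 := by
    rw [Nat.cast_sub (by omega : 1 ≤ k)]
    norm_num
  have hK : ((k - 1 + 1 : ℕ) : ℝ) = (k : ℝ) := by rw [hk1]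
  have hk0 : (k : ℝ) ≠ 0 := by positivity
  have hM0 : ((k - 1 : ℕ) : ℝ) ≠ 0 := by
    rw [hM]
    have : (2 : ℝ) ≤ (k : ℝ) := by exact_mod_cast hk
    linarith
  have hM0' : (k : ℝ) - 1 ≠ 0 := hM ▸ hM0
  have hpt : ∀ S : Fin (k - 1) → EuclideanSpace ℝ (Fin d),
      ((R2 - ‖empMean (Fin.cons z S) - μ‖ ^ 2) - (R2 - ‖empMean S - μ‖ ^ 2))
        = (((k - 1 : ℕ) : ℝ)⁻¹ ^ 2 - ((k : ℝ))⁻¹ ^ 2) * ‖∑ i, (S i - μ)‖ ^ 2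
          - (2 * ((k : ℝ))⁻¹ ^ 2) * (inner ℝ (z - μ) (∑ i, (S i - μ)) : ℝ)
          - ((k : ℝ))⁻¹ ^ 2 * ‖z - μ‖ ^ 2 := by
    intro S
    have hTS : (∑ i, (S i - μ)) = (∑ i, S i) - ((k - 1 : ℕ) : ℝ) • μ := by
      rw [Finset.sum_sub_distrib, Finset.sum_const, Finset.card_univ, Fintype.card_fin,
        ← Nat.cast_smul_eq_nsmul ℝ]
    have h1 : empMean S - μ = ((k - 1 : ℕ) : ℝ)⁻¹ • ∑ i, (S i - μ) := by
      simp only [empMean]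
      rw [hTS, smul_sub, smul_smul, inv_mul_cancel₀ hM0, one_smul]
    have h2 : empMean (Fin.cons z S) - μ = ((k : ℝ))⁻¹ • ((z - μ) + ∑ i, (S i - μ)) := by
      have hwk : (z - μ) + ∑ i, (S i - μ) = (z + ∑ i, S i) - (k : ℝ) • μ := by
        rw [hTS, hM]
        module
      simp only [empMean, Fin.sum_cons, hK]
      rw [hwk, smul_sub, smul_smul, inv_mul_cancel₀ hk0, one_smul]
    rw [h1, h2, norm_smul, norm_smul, mul_pow, mul_pow, norm_add_sq_real]
    simp only [Real.norm_eq_abs, sq_abs]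
    ring
  rw [integral_congr_ae (Filter.Eventually.of_forall hpt)]
  have hinner : Integrable (fun S : Fin (k - 1) → EuclideanSpace ℝ (Fin d) =>
      (inner ℝ (z - μ) (∑ i, (S i - μ)) : ℝ)) (Measure.pi fun _ => D) := by
    simpa only [innerSL_apply_apply] using (innerSL ℝ (z - μ)).integrable_comp hT
  have hI1 : Integrable (fun S : Fin (k - 1) → EuclideanSpace ℝ (Fin d) =>
      (((k - 1 : ℕ) : ℝ)⁻¹ ^ 2 - ((k : ℝ))⁻¹ ^ 2) * ‖∑ i, (S i - μ)‖ ^ 2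
        - (2 * ((k : ℝ))⁻¹ ^ 2) * (inner ℝ (z - μ) (∑ i, (S i - μ)) : ℝ))
      (Measure.pi fun _ => D) :=
    (hT2.const_mul _).sub (hinner.const_mul _)
  have hIa : Integrable (fun S : Fin (k - 1) → EuclideanSpace ℝ (Fin d) =>
      (((k - 1 : ℕ) : ℝ)⁻¹ ^ 2 - ((k : ℝ))⁻¹ ^ 2) * ‖∑ i, (S i - μ)‖ ^ 2)
      (Measure.pi fun _ => D) := hT2.const_mul _
  have hIb : Integrable (fun S : Fin (k - 1) → EuclideanSpace ℝ (Fin d) =>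
      (2 * ((k : ℝ))⁻¹ ^ 2) * (inner ℝ (z - μ) (∑ i, (S i - μ)) : ℝ))
      (Measure.pi fun _ => D) := hinner.const_mul _
  rw [integral_sub hI1 (integrable_const _), integral_sub hIa hIb,
    integral_const_mul, integral_const_mul, integral_const]
  have hz : (∫ S, (inner ℝ (z - μ) (∑ i, (S i - μ)) : ℝ)
      ∂(Measure.pi fun _ : Fin (k - 1) => D)) = 0 := by
    rw [integral_inner hT, hTA, inner_zero_right]
  rw [hz, hTB, ← hR2]
  simp only [measure_univ, probReal_univ, smul_eq_mul, one_mul, one_smul, mul_zero, sub_zero]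
  rw [hM]
  field_simp
  ring
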